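/- arXiv:1309.5236 — 8 statements merged into one kernel-verified Lean document; each statement's English description precedes it below -/
import Mathlib

section
/- Let G be a finite group, let k ≥ 1, and let S = G × R_k be the right group over G. For a subset C ⊆ S, C generates S as a semigroup if and only if the Cayley digraph Cay(S,C) is strongly connected. -/
/-- Multiplication of the right group `G × R_k`: `(g, r_i) * (h, r_j) = (g * h, r_j)`. -/
def rgMul {G : Type*} [Mul G] {k : ℕ} (s t : G × Fin k) : G × Fin k :=
  (s.1 * t.1, t.2)

/-- Membership in the subsemigroup generated by `C` (w.r.t. the multiplication `mul`). -/
inductive SgClosure {S : Type*} (mul : S → S → S) (C : Set S) : S → Prop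
  | base {c : S} : c ∈ C → SgClosure mul C c
  | mul {a b : S} : SgClosure mul C a → SgClosure mul C b → SgClosure mul C (mul a b)

/-- A subset `C` of the right group `S = G × R_k` generates `S` as a semigroup iff
the Cayley digraph `Cay(S, C)` is strongly connected. -/
theorem stmt1 {G : Type*} [Group G] [Finite G] {k : ℕ} (hk : 1 ≤ k)
    (C : Set (G × Fin k)) :
    (∀ s : G × Fin k, SgClosure rgMul C s) ↔
      (∀ u v : G × Fin k,
        Relation.TransGen (fun s t => ∃ c ∈ C, rgMul s c = t) u v) := by
  have assoc : ∀ a b c : G × Fin k, rgMul (rgMul a b) c = rgMul a (rgMul b c) := by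
    intro a b c; simp [rgMul, mul_assoc]
  constructor
  · intro h u v
    have step : ∀ w : G × Fin k, SgClosure rgMul C w →
        ∀ u : G × Fin k,
          Relation.TransGen (fun s t => ∃ c ∈ C, rgMul s c = t) u (rgMul u w) := by
      intro w hw
      induction hw with
      | base hc => intro u; exact Relation.TransGen.single ⟨_, hc, rfl⟩
      | @mul a b ha hb iha ihb =>
        intro u
        have h1 := iha u
        have h2 := ihb (rgMul u a)
        rw [assoc] at h2
        exact h1.trans h2
    have hv := step (u.1⁻¹ * v.1, v.2) (h _) u
    have : rgMul u (u.1⁻¹ * v.1, v.2) = v := by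
      simp [rgMul]
    rwa [this] at hv
  · intro h s
    obtain ⟨c, hc⟩ : ∃ c, c ∈ C := by
      cases h s s with
      | single h1 => obtain ⟨c, hc, _⟩ := h1; exact ⟨c, hc⟩
      | tail _ h1 => obtain ⟨c, hc, _⟩ := h1; exact ⟨c, hc⟩
    have hcs := h c s
    have : ∀ v : G × Fin k,
        Relation.TransGen (fun s t => ∃ c ∈ C, rgMul s c = t) c v → SgClosure rgMul C v := by
      intro v hv
      induction hv with
      | single h1 =>
        obtain ⟨d, hd, rfl⟩ := h1
        exact SgClosure.mul (SgClosure.base hc) (SgClosure.base hd)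
      | tail _ h1 ih =>
        obtain ⟨d, hd, rfl⟩ := h1
        exact SgClosure.mul ih (SgClosure.base hd)
    exact this s hcs
end

section
/- Let S be a semigroup and C ⊆ S a subset such that the Cayley digraph Cay(S,C) is strongly connected. If g ∈ S satisfies g*s = s for some s ∈ S, then g*t = t for every t ∈ S. -/
/-- If the Cayley digraph `Cay(S, C)` of a semigroup `S` is strongly connected and
left multiplication by `g` fixes some `s ∈ S`, then it fixes every element of `S`. -/
theorem stmt2 {S : Type*} [Semigroup S] (C : Set S)
    (hconn : ∀ u v : S, Relation.TransGen (fun s t => ∃ c ∈ C, s * c = t) u v)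
    (g s : S) (hfix : g * s = s) :
    ∀ t : S, g * t = t := by
  intro t
  induction hconn s t with
  | single h =>
    obtain ⟨c, _, hc⟩ := h
    rw [← hc, ← mul_assoc, hfix]
  | tail _ h ih =>
    obtain ⟨c, _, hc⟩ := h
    rw [← hc, ← mul_assoc, ih]
end

section
/- Let G be a finite group of order m with identity e, let k ≥ 1, and let C be a subset of the right group G × R_k on which the first projection is injective (for each a ∈ G there is at most one j with (a,r_j) ∈ C). Then the underlying graph of Cay(G×R_k, C) has exactly k·m vertices, and its number of edges E satisfies, as integers, 2·E = m·( Σ_{a ∈ π_G(C)} (2·k·c_a − c_{a⁻¹}) − c_e ). -/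
/-- The underlying simple graph of the Cayley digraph `Cay(S, C)`
(w.r.t. the multiplication `mul`): distinct `s, t` are adjacent iff
`s * c = t` or `t * c = s` for some `c ∈ C`. -/
def cayUGraph {S : Type*} (mul : S → S → S) (C : Set S) : SimpleGraph S where
  Adj s t := s ≠ t ∧ ∃ c ∈ C, mul s c = t ∨ mul t c = s
  symm := ⟨fun s t ⟨hne, c, hc, h⟩ => ⟨hne.symm, c, hc, h.symm⟩⟩
  loopless := ⟨fun s ⟨hne, _⟩ => hne rfl⟩

/-- `c_a`: the number of `j` with `(a, r_j) ∈ C`. -/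
def cCount {G : Type*} [DecidableEq G] {k : ℕ} (C : Finset (G × Fin k)) (a : G) : ℕ :=
  (C.filter (fun p => p.1 = a)).card

open Finset

lemma rgMul_left_inj {G : Type*} [Group G] {k : ℕ} (s : G × Fin k) :
    Function.Injective (fun c => rgMul s c) := by
  intro a b h
  simp only [rgMul, Prod.mk.injEq] at h
  exact Prod.ext (mul_left_cancel h.1) h.2

lemma degree_eq {G : Type*} [Group G] [Fintype G] [DecidableEq G] {k : ℕ}
    (C : Finset (G × Fin k))
    (hinj : Set.InjOn Prod.fst (C : Set (G × Fin k)))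
    (s : G × Fin k)
    [DecidableRel (cayUGraph rgMul (C : Set (G × Fin k))).Adj] :
    ((cayUGraph rgMul (C : Set (G × Fin k))).degree s : ℤ) =
      C.card + k * (C.filter (fun c => c.2 = s.2)).card
        - (C.filter (fun c => (c.1⁻¹, s.2) ∈ C)).card
        - (if ((1 : G), s.2) ∈ C then 1 else 0) := by
  classical
  set Nout : Finset (G × Fin k) := C.image (fun c => rgMul s c) with hNoutdef
  set Nin : Finset (G × Fin k) :=
    ((C.filter (fun c => c.2 = s.2)).image (fun c => s.1 * c.1⁻¹)) ×ˢ (univ : Finset (Fin k))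
    with hNindef
  have hmem : ∀ t, t ∈ Nout ∪ Nin ↔ ∃ c ∈ C, rgMul s c = t ∨ rgMul t c = s := by
    intro t
    simp only [hNoutdef, hNindef, mem_union, mem_image, mem_product, mem_filter, mem_univ,
      and_true]
    constructor
    · rintro (⟨c, hc, h⟩ | ⟨c, ⟨hc, hc2⟩, ht1⟩)
      · exact ⟨c, hc, Or.inl h⟩
      · refine ⟨c, hc, Or.inr ?_⟩
        have : t.1 * c.1 = s.1 := by rw [← ht1]; group
        exact Prod.ext this hc2
    · rintro ⟨c, hc, h | h⟩
      · exact Or.inl ⟨c, hc, h⟩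
      · have hc2 : c.2 = s.2 := by rw [← h]; rfl
        refine Or.inr ⟨c, ⟨hc, hc2⟩, ?_⟩
        have h1 : t.1 * c.1 = s.1 := by rw [← h] at *; rfl
        rw [← h1]; group
  have hNB : (cayUGraph rgMul (C : Set (G × Fin k))).neighborFinset s = (Nout ∪ Nin).erase s := by
    ext t
    rw [SimpleGraph.mem_neighborFinset, mem_erase, hmem]
    simp only [cayUGraph, Set.mem_setOf_eq]
    constructor
    · rintro ⟨hne, c, hc, h⟩; exact ⟨fun h' => hne h'.symm, c, by simpa using hc, h⟩
    · rintro ⟨hne, c, hc, h⟩; exact ⟨fun h' => hne h'.symm, c, by simpa using hc, h⟩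
  have hself : s ∈ Nout ∪ Nin ↔ ((1 : G), s.2) ∈ C := by
    rw [hmem]
    constructor
    · rintro ⟨c, hc, h | h⟩ <;>
      · have hc1 : c.1 = 1 := by
          have h1 : s.1 * c.1 = s.1 * 1 := by
            simpa [rgMul] using congrArg Prod.fst h
          exact mul_left_cancel h1
        have hc2 : c.2 = s.2 := by rw [← h]; rfl
        have : c = ((1 : G), s.2) := Prod.ext hc1 hc2
        rwa [this] at hc
    · intro h
      exact ⟨((1 : G), s.2), h, Or.inl (by simp [rgMul])⟩
  have hNoutcard : Nout.card = C.card := card_image_of_injective _ (rgMul_left_inj s)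
  have hNincard : Nin.card = (C.filter (fun c => c.2 = s.2)).card * k := by
    rw [hNindef, card_product, card_univ, Fintype.card_fin]
    congr 1
    apply card_image_of_injOn
    intro a ha b hb h
    simp only [coe_filter, Set.mem_setOf_eq] at ha hb
    apply hinj (by simpa using ha.1) (by simpa using hb.1)
    have : a.1⁻¹ = b.1⁻¹ := mul_left_cancel h
    simpa using congrArg Inv.inv this
  have hintereq : Nout ∩ Nin = (C.filter (fun c => (c.1⁻¹, s.2) ∈ C)).image (fun c => rgMul s c) := by
    ext t
    simp only [mem_inter, hNoutdef, hNindef, mem_image, mem_product, mem_filter, mem_univ,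
      and_true]
    constructor
    · rintro ⟨⟨c, hc, hct⟩, ⟨b, ⟨hb, hb2⟩, hb1⟩⟩
      refine ⟨c, ⟨hc, ?_⟩, hct⟩
      have ht1 : t.1 = s.1 * c.1 := by rw [← hct]; rfl
      have h1 : s.1 * b.1⁻¹ = s.1 * c.1 := by rw [hb1, ht1]
      have hbc : b.1 = c.1⁻¹ := by
        have := mul_left_cancel h1
        rw [← this]; group
      have : b = (c.1⁻¹, s.2) := Prod.ext hbc hb2
      rwa [this] at hb
    · rintro ⟨c, ⟨hc, hcinv⟩, hct⟩
      refine ⟨⟨c, hc, hct⟩, ⟨(c.1⁻¹, s.2), ⟨hcinv, rfl⟩, ?_⟩⟩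
      have : t.1 = s.1 * c.1 := by rw [← hct]; rfl
      rw [this]; group
  have hintercard : (Nout ∩ Nin).card = (C.filter (fun c => (c.1⁻¹, s.2) ∈ C)).card := by
    rw [hintereq, card_image_of_injective _ (rgMul_left_inj s)]
  have hunion : ((Nout ∪ Nin).card : ℤ)
      = C.card + k * (C.filter (fun c => c.2 = s.2)).card
        - (C.filter (fun c => (c.1⁻¹, s.2) ∈ C)).card := by
    have := card_union_add_card_inter Nout Nin
    have := congrArg (Nat.cast : ℕ → ℤ) this
    push_cast at this
    rw [hNoutcard, hNincard, hintercard] at this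
    push_cast at this
    linarith
  rw [← SimpleGraph.card_neighborFinset_eq_degree, hNB]
  by_cases h1 : ((1 : G), s.2) ∈ C
  · have hsmem : s ∈ Nout ∪ Nin := hself.mpr h1
    rw [card_erase_of_mem hsmem, if_pos h1]
    have hpos : 1 ≤ (Nout ∪ Nin).card := card_pos.mpr ⟨s, hsmem⟩
    push_cast [Nat.cast_sub hpos]
    rw [hunion]
  · rw [erase_eq_of_notMem (fun h => h1 (hself.mp h)), if_neg h1, hunion]
    ring

lemma fiber_card {G : Type*} [Group G] [Fintype G] [DecidableEq G] {k : ℕ}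
    (C : Finset (G × Fin k)) (a : G) :
    (univ.filter fun j : Fin k => (a, j) ∈ C).card = cCount C a := by
  unfold cCount
  have hinj : Set.InjOn Prod.snd ((C.filter (fun p => p.1 = a)) : Set (G × Fin k)) := by
    intro p hp q hq h
    simp only [coe_filter, Set.mem_setOf_eq] at hp hq
    exact Prod.ext (hp.2.trans hq.2.symm) h
  rw [← Finset.card_image_of_injOn hinj]
  congr 1
  ext j
  simp only [mem_image, mem_filter, mem_univ, true_and]
  constructor
  · intro h; exact ⟨(a, j), ⟨h, rfl⟩, rfl⟩
  · rintro ⟨p, ⟨hp, hp1⟩, hp2⟩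
    have : p = (a, j) := Prod.ext hp1 hp2
    rwa [this] at hp

/-- Edge count for `Cay(G × R_k, C)` when the first projection is injective on `C`:
`k·m` vertices and `2·E = m·( Σ_{a ∈ π_G(C)} (2·k·c_a − c_{a⁻¹}) − c_e )`. -/
theorem stmt4 {G : Type*} [Group G] [Fintype G] [DecidableEq G] {k : ℕ} (hk : 1 ≤ k)
    (C : Finset (G × Fin k))
    (hinj : Set.InjOn Prod.fst (C : Set (G × Fin k))) :
    Nat.card (G × Fin k) = k * Fintype.card G ∧
      2 * ((cayUGraph rgMul (C : Set (G × Fin k))).edgeSet.ncard : ℤ) =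
        (Fintype.card G : ℤ) *
          ((∑ a ∈ C.image Prod.fst,
              (2 * (k : ℤ) * cCount C a - cCount C a⁻¹)) - cCount C 1) := by
  classical
  constructor
  · simp [Nat.card_eq_fintype_card, mul_comm]
  set Γ := cayUGraph rgMul (C : Set (G × Fin k)) with hΓ
  have hE : (Γ.edgeSet.ncard : ℤ) = (Γ.edgeFinset.card : ℤ) := by
    rw [Set.ncard_eq_toFinset_card']
    congr
  have hhand : ∑ v, Γ.degree v = 2 * Γ.edgeFinset.card :=
    SimpleGraph.sum_degrees_eq_twice_card_edges Γ
  have hsum : 2 * ((Γ.edgeSet.ncard : ℤ)) = ∑ v, (Γ.degree v : ℤ) := by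
    rw [hE]
    have := congrArg (Nat.cast : ℕ → ℤ) hhand
    push_cast at this
    linarith
  rw [hsum]
  have hdeg : ∀ v : G × Fin k, (Γ.degree v : ℤ) =
      C.card + k * (C.filter (fun c => c.2 = v.2)).card
        - (C.filter (fun c => (c.1⁻¹, v.2) ∈ C)).card
        - (if ((1 : G), v.2) ∈ C then 1 else 0) :=
    fun v => degree_eq C hinj v
  calc ∑ v, (Γ.degree v : ℤ)
      = ∑ x : G, ∑ j : Fin k,
          ((C.card : ℤ) + k * (C.filter (fun c => c.2 = j)).card
            - (C.filter (fun c => (c.1⁻¹, j) ∈ C)).card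
            - (if ((1 : G), j) ∈ C then 1 else 0)) := by
        rw [Fintype.sum_prod_type]
        exact Finset.sum_congr rfl fun x _ => Finset.sum_congr rfl fun j _ => hdeg (x, j)
    _ = (Fintype.card G : ℤ) * ∑ j : Fin k,
          ((C.card : ℤ) + k * (C.filter (fun c => c.2 = j)).card
            - (C.filter (fun c => (c.1⁻¹, j) ∈ C)).card
            - (if ((1 : G), j) ∈ C then 1 else 0)) := by
        rw [Finset.sum_const, nsmul_eq_mul, Finset.card_univ]
    _ = (Fintype.card G : ℤ) *
          ((∑ a ∈ C.image Prod.fst,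
              (2 * (k : ℤ) * cCount C a - cCount C a⁻¹)) - cCount C 1) := by
        congr 1
        have hd : ∑ j : Fin k, ((C.filter (fun c => c.2 = j)).card : ℤ) = (C.card : ℤ) := by
          have := Finset.card_eq_sum_card_fiberwise
            (f := Prod.snd) (s := C) (t := (univ : Finset (Fin k)))
            (fun x _ => mem_univ _)
          rw [this]; push_cast; rfl
        have hL : ∑ j : Fin k, (if ((1 : G), j) ∈ C then (1:ℤ) else 0) = (cCount C 1 : ℤ) := by
          rw [Finset.sum_boole, ← fiber_card C 1]
        have hI : ∑ j : Fin k, ((C.filter (fun c => (c.1⁻¹, j) ∈ C)).card : ℤ)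
            = ∑ a ∈ C.image Prod.fst, (cCount C a⁻¹ : ℤ) := by
          have step1 : ∀ j : Fin k, ((C.filter (fun c => (c.1⁻¹, j) ∈ C)).card : ℤ)
              = ∑ c ∈ C, (if (c.1⁻¹, j) ∈ C then (1:ℤ) else 0) := by
            intro j; rw [Finset.sum_boole]
          simp_rw [step1]
          rw [Finset.sum_comm]
          have step2 : ∀ c ∈ C, ∑ j : Fin k, (if (c.1⁻¹, j) ∈ C then (1:ℤ) else 0)
              = (cCount C c.1⁻¹ : ℤ) := by
            intro c _; rw [Finset.sum_boole, ← fiber_card C c.1⁻¹]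
          rw [Finset.sum_congr rfl step2]
          rw [Finset.sum_image (fun x hx y hy h => hinj (by simpa using hx) (by simpa using hy) h)]
        have hn : ∑ a ∈ C.image Prod.fst, (cCount C a : ℤ) = (C.card : ℤ) := by
          have := Finset.card_eq_sum_card_fiberwise
            (f := Prod.fst) (s := C) (t := C.image Prod.fst)
            (fun x hx => mem_image_of_mem _ hx)
          rw [this]; push_cast; rfl
        rw [Finset.sum_sub_distrib, Finset.sum_sub_distrib, Finset.sum_add_distrib,
          Finset.sum_const, ← Finset.mul_sum, hd, hL, hI, Finset.sum_sub_distrib,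
          ← Finset.mul_sum, hn, Finset.card_univ, Fintype.card_fin]
        ring
end

section
/- Let G be a finite group of order m with identity e, let k ≥ 1, and let C be a subset of the right group G × R_k on which the first projection is injective (for each a ∈ G there is at most one j with (a,r_j) ∈ C). Then the number of edges E of the underlying graph of Cay(G×R_k, C) satisfies, as integers, 2·E ≥ m·( (2k−1)·|C| − c_e ). -/
lemma psi_eq {G : Type*} [Group G] {k : ℕ} (p q : (G × Fin k) × (G × Fin k))
    (h : s(p.1, rgMul p.1 p.2) = s(q.1, rgMul q.1 q.2)) :
    q = p ∨ (q.1 = rgMul p.1 p.2 ∧ q.2 = (p.2.1⁻¹, p.1.2)) := by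
  obtain ⟨⟨s1, s2⟩, c1, c2⟩ := p
  obtain ⟨⟨t1, t2⟩, d1, d2⟩ := q
  simp only [rgMul, Sym2.eq_iff, Prod.ext_iff, Prod.mk.injEq] at h ⊢
  rcases h with ⟨⟨hs1, hs2⟩, hm1, hm2⟩ | ⟨⟨hs1, hs2⟩, hm1, hm2⟩
  · left
    subst hs1 hs2 hm2
    exact ⟨⟨rfl, rfl⟩, (mul_left_cancel hm1).symm, rfl⟩
  · right
    refine ⟨⟨hm1.symm, hm2.symm⟩, ?_, hs2.symm⟩
    have : c1 * d1 = 1 := by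
      have := hs1
      rw [← hm1, mul_assoc] at this
      exact (mul_eq_left.mp this.symm)
    exact eq_inv_of_mul_eq_one_right this

/-- Lower edge bound for `Cay(G × R_k, C)` when the first projection is injective on `C`:
`2·E ≥ m·((2k − 1)·|C| − c_e)`. -/
theorem stmt5 {G : Type*} [Group G] [Fintype G] [DecidableEq G] {k : ℕ} (hk : 1 ≤ k)
    (C : Finset (G × Fin k))
    (hinj : Set.InjOn Prod.fst (C : Set (G × Fin k))) :
    2 * ((cayUGraph rgMul (C : Set (G × Fin k))).edgeSet.ncard : ℤ) ≥
      (Fintype.card G : ℤ) * ((2 * (k : ℤ) - 1) * C.card - cCount C 1) := by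
  classical
  set m := Fintype.card G with hm
  set ψ : (G × Fin k) × (G × Fin k) → Sym2 (G × Fin k) :=
    fun p => s(p.1, rgMul p.1 p.2) with hψdef
  set T : Finset ((G × Fin k) × (G × Fin k)) :=
    (Finset.univ ×ˢ C).filter (fun p => ¬ rgMul p.1 p.2 = p.1) with hTdef
  set T₂ : Finset ((G × Fin k) × (G × Fin k)) :=
    T.filter (fun p => (p.2.1⁻¹, p.1.2) ∈ C) with hT2def
  have hmemT : ∀ p : (G × Fin k) × (G × Fin k),
      p ∈ T ↔ p.2 ∈ C ∧ ¬ rgMul p.1 p.2 = p.1 := by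
    intro p
    simp [hTdef, Finset.mem_filter, Finset.mem_product]
  have hT2sub : T₂ ⊆ T := Finset.filter_subset _ _
  -- loops count
  have hLcard : ((Finset.univ ×ˢ C).filter
      (fun p : (G × Fin k) × (G × Fin k) => rgMul p.1 p.2 = p.1)).card = m * cCount C 1 := by
    have : m * cCount C 1 = ((Finset.univ : Finset G) ×ˢ (C.filter fun c => c.1 = 1)).card := by
      rw [Finset.card_product, Finset.card_univ, hm, cCount]
    rw [this]
    apply Finset.card_nbij' (fun p => (p.1.1, p.2)) (fun q => ((q.1, q.2.2), q.2))
    · intro p hp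
      rw [Finset.mem_coe, Finset.mem_filter, Finset.mem_product] at hp
      obtain ⟨⟨-, hpC⟩, heq⟩ := hp
      have heq' : (p.1.1 * p.2.1, p.2.2) = (p.1.1, p.1.2) := heq
      rw [Prod.ext_iff] at heq'
      have h1 : p.2.1 = 1 := by
        have := heq'.1
        simpa [mul_eq_left] using this
      exact Finset.mem_product.mpr ⟨Finset.mem_univ _, Finset.mem_filter.mpr ⟨hpC, h1⟩⟩
    · intro q hq
      rw [Finset.mem_coe, Finset.mem_product, Finset.mem_filter] at hq
      obtain ⟨-, hqC, hq1⟩ := hq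
      rw [Finset.mem_coe, Finset.mem_filter, Finset.mem_product]
      refine ⟨⟨Finset.mem_univ _, hqC⟩, ?_⟩
      show (q.1 * q.2.1, q.2.2) = (q.1, q.2.2)
      rw [hq1, mul_one]
    · intro p hp
      rw [Finset.mem_coe, Finset.mem_filter, Finset.mem_product] at hp
      obtain ⟨-, heq⟩ := hp
      have heq' : (p.1.1 * p.2.1, p.2.2) = (p.1.1, p.1.2) := heq
      rw [Prod.ext_iff] at heq'
      have h2 : p.2.2 = p.1.2 := heq'.2
      exact Prod.ext (Prod.ext rfl h2) rfl
    · intro q hq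
      rfl
  -- |T| + loops = m * k * |C|
  have hTtot : T.card + m * cCount C 1 = m * k * C.card := by
    rw [← hLcard]
    rw [hTdef]
    have := Finset.card_filter_add_card_filter_not
      (s := (Finset.univ : Finset (G × Fin k)) ×ˢ C)
      (p := fun p : (G × Fin k) × (G × Fin k) => rgMul p.1 p.2 = p.1)
    rw [add_comm]
    rw [this]
    rw [Finset.card_product, Finset.card_univ, Fintype.card_prod, Fintype.card_fin, hm]
  -- c₁ ≠ 1 on T₂
  have hT2ne1 : ∀ p ∈ T₂, ¬ p.2.1 = 1 := by
    intro p hp h1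
    rw [hT2def, Finset.mem_filter] at hp
    obtain ⟨hpT, hpC'⟩ := hp
    rw [hmemT] at hpT
    obtain ⟨hpC, hpne⟩ := hpT
    rw [h1, inv_one] at hpC'
    have heq : ((1 : G), p.1.2) = p.2 := by
      refine hinj (Finset.mem_coe.mpr hpC') (Finset.mem_coe.mpr hpC) ?_
      simp [h1]
    apply hpne
    have h2 : p.2.2 = p.1.2 := by rw [← heq]
    show (p.1.1 * p.2.1, p.2.2) = (p.1.1, p.1.2)
    rw [h1, mul_one, h2]
  -- |T₂| ≤ m * |{c ∈ C : c₁ ≠ 1}|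
  have hT2card : T₂.card ≤ m * (C.filter fun c => ¬ c.1 = 1).card := by
    have htarget : m * (C.filter fun c => ¬ c.1 = 1).card
        = ((Finset.univ : Finset G) ×ˢ (C.filter fun c => ¬ c.1 = 1)).card := by
      rw [Finset.card_product, Finset.card_univ, hm]
    rw [htarget]
    apply Finset.card_le_card_of_injOn (fun p => (p.1.1, p.2))
    · intro p hp
      have hpT := hT2sub hp
      rw [hmemT] at hpT
      exact Finset.mem_product.mpr ⟨Finset.mem_univ _,
        Finset.mem_filter.mpr ⟨hpT.1, hT2ne1 p hp⟩⟩
    · intro p hp q hq heq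
      simp only [Prod.mk.injEq] at heq
      obtain ⟨h11, h2⟩ := heq
      have hp' := hp; have hq' := hq
      rw [Finset.mem_coe, hT2def, Finset.mem_filter] at hp' hq'
      have hsnd : p.1.2 = q.1.2 := by
        have h := hinj (Finset.mem_coe.mpr hp'.2) (Finset.mem_coe.mpr hq'.2)
          (by simp [h2])
        rw [Prod.ext_iff] at h
        exact h.2
      exact Prod.ext (Prod.ext h11 hsnd) h2
  -- edge set equals image of ψ on T
  have hedge : (cayUGraph rgMul (C : Set (G × Fin k))).edgeSet = ↑(T.image ψ) := by
    ext e
    induction e using Sym2.ind with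
    | _ a b =>
      rw [SimpleGraph.mem_edgeSet]
      show (a ≠ b ∧ ∃ c ∈ (C : Set (G × Fin k)), rgMul a c = b ∨ rgMul b c = a) ↔ _
      constructor
      · rintro ⟨hne, c, hc, hcase | hcase⟩
        · refine Finset.mem_coe.mpr (Finset.mem_image.mpr ⟨(a, c), ?_, ?_⟩)
          · exact (hmemT _).mpr ⟨Finset.mem_coe.mp hc, by rw [hcase]; exact fun h => hne h.symm⟩
          · show s(a, rgMul a c) = s(a, b)
            rw [hcase]
        · refine Finset.mem_coe.mpr (Finset.mem_image.mpr ⟨(b, c), ?_, ?_⟩)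
          · exact (hmemT _).mpr ⟨Finset.mem_coe.mp hc, by rw [hcase]; exact hne⟩
          · show s(b, rgMul b c) = s(a, b)
            rw [hcase, Sym2.eq_swap]
      · intro he
        obtain ⟨p, hp, hpe⟩ := Finset.mem_image.mp (Finset.mem_coe.mp he)
        rw [hmemT] at hp
        have hpe' : s(p.1, rgMul p.1 p.2) = s(a, b) := hpe
        rw [Sym2.eq_iff] at hpe'
        rcases hpe' with ⟨h1, h2⟩ | ⟨h1, h2⟩
        · exact ⟨by rw [← h1, ← h2]; exact fun h => hp.2 h.symm,
            p.2, Finset.mem_coe.mpr hp.1, Or.inl (by rw [← h1]; exact h2)⟩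
        · exact ⟨by rw [← h1, ← h2]; exact fun h => hp.2 h,
            p.2, Finset.mem_coe.mpr hp.1, Or.inr (by rw [← h1]; exact h2)⟩
  -- injectivity of ψ on T \ T₂
  have him1 : ((T \ T₂).image ψ).card = (T \ T₂).card := by
    apply Finset.card_image_of_injOn
    intro p hp q hq heq
    rcases psi_eq p q heq with h | ⟨h1, h2⟩
    · exact h.symm
    · exfalso
      have hqT : q ∈ T := (Finset.mem_sdiff.mp hq).1
      rw [hmemT] at hqT
      have : (p.2.1⁻¹, p.1.2) ∈ C := by rw [← h2]; exact hqT.1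
      exact (Finset.mem_sdiff.mp hp).2
        (Finset.mem_filter.mpr ⟨(Finset.mem_sdiff.mp hp).1, this⟩)
  -- fibers of ψ on T₂ have size ≤ 2
  have him2 : T₂.card ≤ 2 * (T₂.image ψ).card := by
    apply Finset.card_le_mul_card_image
    intro e he
    obtain ⟨p, hp, hpe⟩ := Finset.mem_image.mp he
    have hsub : (T₂.filter fun q => ψ q = e) ⊆ {p, (rgMul p.1 p.2, (p.2.1⁻¹, p.1.2))} := by
      intro q hq
      rw [Finset.mem_filter] at hq
      rcases psi_eq p q (by show ψ p = ψ q; rw [hpe, hq.2]) with h | ⟨h1, h2⟩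
      · exact Finset.mem_insert.mpr (Or.inl h)
      · exact Finset.mem_insert.mpr (Or.inr (Finset.mem_singleton.mpr (Prod.ext h1 h2)))
    calc (T₂.filter fun q => ψ q = e).card
        ≤ ({p, (rgMul p.1 p.2, (p.2.1⁻¹, p.1.2))} : Finset _).card := Finset.card_le_card hsub
      _ ≤ 2 := Finset.card_insert_le _ _ |>.trans (by simp)
  -- disjointness of the two images
  have hdisj : Disjoint ((T \ T₂).image ψ) (T₂.image ψ) := by
    rw [Finset.disjoint_left]
    intro e he1 he2
    obtain ⟨p, hp, hpe⟩ := Finset.mem_image.mp he1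
    obtain ⟨q, hq, hqe⟩ := Finset.mem_image.mp he2
    rcases psi_eq p q (by show ψ p = ψ q; rw [hpe, hqe]) with h | ⟨h1, h2⟩
    · rw [h] at hq
      exact (Finset.mem_sdiff.mp hp).2 hq
    · have hqT : q ∈ T := hT2sub hq
      rw [hmemT] at hqT
      have : (p.2.1⁻¹, p.1.2) ∈ C := by rw [← h2]; exact hqT.1
      exact (Finset.mem_sdiff.mp hp).2
        (Finset.mem_filter.mpr ⟨(Finset.mem_sdiff.mp hp).1, this⟩)
  -- total image
  have himage : (T.image ψ).card = ((T \ T₂).image ψ).card + (T₂.image ψ).card := by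
    rw [← Finset.card_union_of_disjoint hdisj, ← Finset.image_union,
      Finset.sdiff_union_of_subset hT2sub]
  -- counts
  have hE : (cayUGraph rgMul (C : Set (G × Fin k))).edgeSet.ncard = (T.image ψ).card := by
    rw [hedge, Set.ncard_coe_finset]
  have hsd : (T \ T₂).card + T₂.card = T.card := Finset.card_sdiff_add_card_eq_card hT2sub
  have hfil : cCount C 1 + (C.filter fun c => ¬ c.1 = 1).card = C.card := by
    rw [cCount]
    exact Finset.card_filter_add_card_filter_not (s := C) (fun c : G × Fin k => c.1 = 1)
  -- final arithmetic
  rw [hE]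
  have c1 : (((T \ T₂).image ψ).card : ℤ) = (T \ T₂).card := by rw [him1]
  have c2 : (T₂.card : ℤ) ≤ 2 * ((T₂.image ψ).card : ℤ) := by exact_mod_cast him2
  have c3 : ((T \ T₂).card : ℤ) + T₂.card = T.card := by exact_mod_cast hsd
  have c4 : (T.card : ℤ) + m * cCount C 1 = m * k * C.card := by exact_mod_cast hTtot
  have c5 : (T₂.card : ℤ) ≤ m * ((C.filter fun c => ¬ c.1 = 1).card : ℤ) := by
    exact_mod_cast hT2card
  have c6 : (cCount C 1 : ℤ) + ((C.filter fun c => ¬ c.1 = 1).card : ℤ) = C.card := by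
    exact_mod_cast hfil
  have c7 : ((T.image ψ).card : ℤ) = ((T \ T₂).image ψ).card + ((T₂.image ψ).card : ℤ) := by
    exact_mod_cast himage
  have c8 : (m : ℤ) * ((C.filter fun c => ¬ c.1 = 1).card : ℤ)
      = m * C.card - m * cCount C 1 := by
    rw [← c6]; ring
  rw [c7]
  nlinarith [c1, c2, c3, c4, c5, c6, c8]
end

section
/- Let G be a finite nontrivial group of order m, let k ≥ 4, and let C be a generating set of the right group G × R_k on which the first projection is injective (for each a ∈ G there is at most one j with (a,r_j) ∈ C). Then the underlying graph of Cay(G×R_k, C) has more than 3·k·m − 6 edges (so it violates the edge bound for planar graphs on k·m vertices given by Euler's formula). -/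
/-- If `G` is a nontrivial finite group, `k ≥ 4` and `C` generates `G × R_k` with the
first projection injective on `C`, then the underlying graph of `Cay(G × R_k, C)` has
more than `3·k·m − 6` edges, violating Euler's planarity bound. -/
theorem stmt7 {G : Type*} [Group G] [Fintype G] [Nontrivial G] {k : ℕ} (hk : 4 ≤ k)
    (C : Finset (G × Fin k))
    (hgen : ∀ s : G × Fin k, SgClosure rgMul (C : Set (G × Fin k)) s)
    (hinj : Set.InjOn Prod.fst (C : Set (G × Fin k))) :
    ((cayUGraph rgMul (C : Set (G × Fin k))).edgeSet.ncard : ℤ) >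
      3 * (k : ℤ) * Fintype.card G - 6 := by
  classical
  set m := Fintype.card G with hm
  have hm1 : 1 ≤ m := Fintype.card_pos
  -- every second coordinate appears in C
  have hsnd : ∀ s : G × Fin k, SgClosure rgMul (C : Set (G × Fin k)) s →
      ∃ c ∈ C, c.2 = s.2 := by
    intro s h
    induction h with
    | base hc => exact ⟨_, hc, rfl⟩
    | mul ha hb iha ihb => exact ihb
  have hsurj : ∀ j : Fin k, ∃ c ∈ C, c.2 = j := fun j => hsnd ((1 : G), j) (hgen _)
  have hkC : k ≤ C.card := by
    have : Set.SurjOn Prod.snd (C : Set (G × Fin k)) ((Finset.univ : Finset (Fin k)) : Set (Fin k)) := by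
      intro j _
      obtain ⟨c, hc, hc2⟩ := hsurj j
      exact ⟨c, hc, hc2⟩
    have := Finset.card_le_card_of_surjOn Prod.snd this
    simpa using this
  -- the arc set
  set B : Finset ((G × Fin k) × (G × Fin k)) := Finset.univ ×ˢ C with hB
  set good : Finset ((G × Fin k) × (G × Fin k)) :=
    B.filter (fun p => rgMul p.1 p.2 ≠ p.1) with hgooddef
  set bad : Finset ((G × Fin k) × (G × Fin k)) :=
    B.filter (fun p => ¬ rgMul p.1 p.2 ≠ p.1) with hbaddef
  have hBcard : good.card + bad.card = m * k * C.card := by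
    rw [hgooddef, hbaddef, Finset.card_filter_add_card_filter_not, hB,
      Finset.card_product]
    simp [hm, mul_assoc]
  have hbad : bad.card ≤ m := by
    apply Finset.card_le_card_of_injOn (fun p => p.1.1) (fun a _ => Finset.mem_univ _)
    intro p hp q hq h
    simp only [hbaddef, Finset.coe_filter, Set.mem_setOf_eq, not_not] at hp hq
    obtain ⟨hpB, hpe⟩ := hp
    obtain ⟨hqB, hqe⟩ := hq
    have hpC : p.2 ∈ C := by
      have := Finset.mem_product.1 hpB; exact this.2
    have hqC : q.2 ∈ C := by
      have := Finset.mem_product.1 hqB; exact this.2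
    -- from rgMul p.1 p.2 = p.1 : p.2.1 = 1, p.2.2 = p.1.2
    have hp1 : p.2.1 = 1 := by
      have := congrArg Prod.fst hpe
      simp only [rgMul] at this
      have : p.1.1 * p.2.1 = p.1.1 * 1 := by simpa using this
      exact mul_left_cancel this
    have hq1 : q.2.1 = 1 := by
      have := congrArg Prod.fst hqe
      simp only [rgMul] at this
      have : q.1.1 * q.2.1 = q.1.1 * 1 := by simpa using this
      exact mul_left_cancel this
    have hp2 : p.2.2 = p.1.2 := by
      have := congrArg Prod.snd hpe
      simpa [rgMul] using this
    have hq2 : q.2.2 = q.1.2 := by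
      have := congrArg Prod.snd hqe
      simpa [rgMul] using this
    have hc : p.2 = q.2 := by
      apply hinj hpC hqC
      simp [hp1, hq1]
    apply Prod.ext
    · apply Prod.ext h (by rw [← hp2, ← hq2, hc])
    · rw [hc]
  -- A : set of arcs (s, s*c), s ≠ s*c
  set A : Finset ((G × Fin k) × (G × Fin k)) :=
    good.image (fun p => (p.1, rgMul p.1 p.2)) with hAdef
  have hAcard : A.card = good.card := by
    rw [hAdef]
    apply Finset.card_image_of_injOn
    intro p hp q hq h
    simp only [rgMul, Prod.mk.injEq] at h
    obtain ⟨h1, h21, h22⟩ := h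
    rw [← h1] at h21
    exact Prod.ext h1 (Prod.ext (mul_left_cancel h21) h22)
  -- membership characterization of A
  have hAmem : ∀ s t : G × Fin k, (s, t) ∈ A ↔
      (t ≠ s ∧ ((s.1)⁻¹ * t.1, t.2) ∈ C) := by
    intro s t
    rw [hAdef]
    simp only [Finset.mem_image, hgooddef, Finset.mem_filter, hB, Finset.mem_product,
      Finset.mem_univ, true_and]
    constructor
    · rintro ⟨p, ⟨hpC, hpne⟩, hpe⟩
      simp only [Prod.mk.injEq] at hpe
      obtain ⟨h1, h2⟩ := hpe
      constructor
      · rw [← h2, ← h1]; exact hpne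
      · have : ((s.1)⁻¹ * t.1, t.2) = p.2 := by
          rw [← h2, ← h1]
          simp [rgMul]
        rw [this]; exact hpC
    · rintro ⟨hne, hC⟩
      refine ⟨(s, ((s.1)⁻¹ * t.1, t.2)), ⟨hC, ?_⟩, ?_⟩
      · show rgMul s _ ≠ s
        have : rgMul s ((s.1)⁻¹ * t.1, t.2) = t := by
          simp only [rgMul]
          exact Prod.ext (by simp [mul_assoc]) rfl
        rw [this]; exact hne
      · simp only [Prod.mk.injEq, true_and]
        simp only [rgMul]
        exact Prod.ext (by simp [mul_assoc]) rfl
  set A₁ : Finset ((G × Fin k) × (G × Fin k)) :=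
    A.filter (fun p => (p.2, p.1) ∈ A) with hA1def
  set A₂ : Finset ((G × Fin k) × (G × Fin k)) :=
    A.filter (fun p => ¬ (p.2, p.1) ∈ A) with hA2def
  have hA12 : A₁.card + A₂.card = A.card := by
    rw [hA1def, hA2def, Finset.card_filter_add_card_filter_not]
  -- A₁ is small : injects into G × C
  have hA1card : A₁.card ≤ m * C.card := by
    have hle : A₁.card ≤ ((Finset.univ : Finset G) ×ˢ C).card := by
      apply Finset.card_le_card_of_injOn
        (fun p => (p.1.1, ((p.1.1)⁻¹ * p.2.1, p.2.2)))
      · intro p hp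
        rw [Finset.mem_coe, hA1def, Finset.mem_filter] at hp
        have hpA := hp.1
        obtain ⟨s, t⟩ := p
        rw [hAmem] at hpA
        exact Finset.mem_product.2 ⟨Finset.mem_univ _, hpA.2⟩
      · intro p hp q hq h
        simp only [hA1def, Finset.coe_filter, Set.mem_setOf_eq] at hp hq
        obtain ⟨hpA, hpA'⟩ := hp
        obtain ⟨hqA, hqA'⟩ := hq
        simp only [Prod.mk.injEq] at h
        obtain ⟨e1, e21, e22⟩ := h
        rw [← e1] at e21
        have e21' : p.2.1 = q.2.1 := mul_left_cancel e21
        rw [hAmem] at hpA' hqA'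
        have c1 : ((p.2.1)⁻¹ * p.1.1, p.1.2) ∈ C := hpA'.2
        have c2 : ((q.2.1)⁻¹ * q.1.1, q.1.2) ∈ C := hqA'.2
        have heq : ((p.2.1)⁻¹ * p.1.1, p.1.2) = ((q.2.1)⁻¹ * q.1.1, q.1.2) :=
          hinj c1 c2 (by simp only; rw [e1, e21'])
        have e12 : p.1.2 = q.1.2 := (Prod.ext_iff.1 heq).2
        exact Prod.ext (Prod.ext e1 e12) (Prod.ext e21' e22)
    rw [Finset.card_product, Finset.card_univ] at hle
    exact hle
  -- the edge sets
  set E₁ : Finset (Sym2 (G × Fin k)) := A₁.image (fun p => Sym2.mk p.1 p.2) with hE1def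
  set E₂ : Finset (Sym2 (G × Fin k)) := A₂.image (fun p => Sym2.mk p.1 p.2) with hE2def
  have hE2card : E₂.card = A₂.card := by
    rw [hE2def]
    apply Finset.card_image_of_injOn
    intro p hp q hq h
    rcases Sym2.mk_eq_mk_iff.1 h with h | h
    · exact h
    · exfalso
      simp only [hA2def, Finset.coe_filter, Set.mem_setOf_eq] at hp hq
      have h' : p = (q.2, q.1) := h
      exact hq.2 (h' ▸ hp.1)
  have hE1card : A₁.card ≤ 2 * E₁.card := by
    rw [hE1def]
    apply Finset.card_le_mul_card_image
    intro b hb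
    rw [Finset.mem_image] at hb
    obtain ⟨p, hp, hpb⟩ := hb
    have hsub2 : A₁.filter (fun a => Sym2.mk a.1 a.2 = b) ⊆ {p, (p.2, p.1)} := by
      intro q hq
      rw [Finset.mem_filter] at hq
      have hqp : Sym2.mk q.1 q.2 = Sym2.mk p.1 p.2 := by rw [hq.2, hpb]
      rcases Sym2.mk_eq_mk_iff.1 hqp with h | h
      · simp [h]
      · have : q = (p.2, p.1) := h
        simp [this]
    have h2' : ({p, (p.2, p.1)} : Finset _).card ≤ 2 := by
      apply le_trans (Finset.card_insert_le _ _)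
      simp
    exact le_trans (Finset.card_le_card hsub2) h2'
  have hdisj : Disjoint E₁ E₂ := by
    rw [Finset.disjoint_left]
    intro e he1 he2
    rw [hE1def, Finset.mem_image] at he1
    rw [hE2def, Finset.mem_image] at he2
    obtain ⟨p, hp, hpe⟩ := he1
    obtain ⟨q, hq, hqe⟩ := he2
    have hpq : Sym2.mk p.1 p.2 = Sym2.mk q.1 q.2 := by rw [hpe, hqe]
    simp only [hA1def, Finset.mem_filter] at hp
    simp only [hA2def, Finset.mem_filter] at hq
    rcases Sym2.mk_eq_mk_iff.1 hpq with h | h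
    · rw [h] at hp; exact hq.2 hp.2
    · have h' : p = (q.2, q.1) := h
      exact hq.2 (h' ▸ hp.1)
  -- E₁ ∪ E₂ is contained in the edge set
  have hsub : ((E₁ ∪ E₂ : Finset (Sym2 (G × Fin k))) : Set (Sym2 (G × Fin k))) ⊆
      (cayUGraph rgMul (C : Set (G × Fin k))).edgeSet := by
    intro e he
    simp only [Finset.coe_union, Set.mem_union, Finset.mem_coe, hE1def, hE2def,
      Finset.mem_image] at he
    have hex : ∃ p ∈ A, Sym2.mk p.1 p.2 = e := by
      rcases he with ⟨p, hp, hpe⟩ | ⟨p, hp, hpe⟩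
      · exact ⟨p, (Finset.mem_filter.1 hp).1, hpe⟩
      · exact ⟨p, (Finset.mem_filter.1 hp).1, hpe⟩
    obtain ⟨p, hp, hpe⟩ := hex
    obtain ⟨s, t⟩ := p
    rw [hAmem] at hp
    rw [← hpe]
    rw [SimpleGraph.mem_edgeSet]
    refine ⟨fun h => hp.1 h.symm, ((s.1)⁻¹ * t.1, t.2), hp.2, Or.inl ?_⟩
    simp only [rgMul]
    exact Prod.ext (by simp [mul_assoc]) rfl
  -- cardinality bound on the edge set
  have hedge : (E₁ ∪ E₂).card ≤
      (cayUGraph rgMul (C : Set (G × Fin k))).edgeSet.ncard := by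
    rw [← Set.ncard_coe_finset]
    exact Set.ncard_le_ncard hsub (Set.toFinite _)
  -- final arithmetic
  have hunion : E₁.card + E₂.card = (E₁ ∪ E₂).card :=
    (Finset.card_union_of_disjoint hdisj).symm
  have hAgood : A.card + bad.card = m * k * C.card := by rw [hAcard]; exact hBcard
  set n := C.card with hn
  have hkn : (k : ℤ) ≤ n := by exact_mod_cast hkC
  have hm1' : (1 : ℤ) ≤ m := by exact_mod_cast hm1
  have hk4 : (4 : ℤ) ≤ k := by exact_mod_cast hk
  have z1 : (A.card : ℤ) + bad.card = m * k * n := by exact_mod_cast hAgood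
  have z2 : (bad.card : ℤ) ≤ m := by exact_mod_cast hbad
  have z3 : (A₁.card : ℤ) + A₂.card = A.card := by exact_mod_cast hA12
  have z4 : (A₁.card : ℤ) ≤ m * n := by exact_mod_cast hA1card
  have z5 : (E₂.card : ℤ) = A₂.card := by exact_mod_cast hE2card
  have z6 : (A₁.card : ℤ) ≤ 2 * E₁.card := by exact_mod_cast hE1card
  have z7 : (E₁.card : ℤ) + E₂.card ≤
      ((cayUGraph rgMul (C : Set (G × Fin k))).edgeSet.ncard : ℤ) := by
    have := hunion ▸ hedge
    exact_mod_cast this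
  have hs1 : (0:ℤ) ≤ (m:ℤ) * (2*k-1) := mul_nonneg (by positivity) (by linarith)
  have hint1 := mul_le_mul_of_nonneg_left hkn hs1
  have hs3 : (0:ℤ) ≤ 2*(k:ℤ)*k - 7*k - 2 := by
    nlinarith [mul_nonneg (by linarith : (0:ℤ) ≤ 2*(k:ℤ)+1) (by linarith : (0:ℤ) ≤ (k:ℤ)-4)]
  have hint2 := mul_nonneg (by linarith : (0:ℤ) ≤ (m:ℤ)-1) hs3
  linarith [z1, z2, z3, z4, z5, z6, z7, hint1, hint2, hs3]
end

section
/- Let G be a finite group of order m with identity e, and let a₁, a₂, a₃ ∈ G be pairwise distinct elements with aᵢ ≠ e and aᵢ² = e for each i, such that aₓ·a_y ∉ {a₁,a₂,a₃} whenever x ≠ y. Let C = {(a₁,r₁),(a₂,r₂),(a₃,r₃)} ⊆ G × R₃. Then the underlying graph of Cay(G×R₃, C) has 3m vertices, is triangle-free, and its number of edges E satisfies 2·E = 15·m. -/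
private lemma cay_adj_iff {G : Type*} [Group G] (A : Fin 3 → G)
    (hinvA : ∀ m, A m * A m = 1) (g h : G) (i j : Fin 3) :
    (cayUGraph rgMul (Set.range fun m => ((A m, m) : G × Fin 3))).Adj (g, i) (h, j) ↔
      ((g, i) : G × Fin 3) ≠ (h, j) ∧ (h = g * A j ∨ h = g * A i) := by
  constructor
  · rintro ⟨hne, c, ⟨m, rfl⟩, hc | hc⟩
    · refine ⟨hne, Or.inl ?_⟩
      simp only [rgMul, Prod.mk.injEq] at hc
      obtain ⟨h1, rfl⟩ := hc
      exact h1.symm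
    · refine ⟨hne, Or.inr ?_⟩
      simp only [rgMul, Prod.mk.injEq] at hc
      obtain ⟨h1, rfl⟩ := hc
      calc h = h * (A m * A m) := by rw [hinvA, mul_one]
        _ = (h * A m) * A m := by rw [mul_assoc]
        _ = g * A m := by rw [h1]
  · rintro ⟨hne, rfl | rfl⟩
    · exact ⟨hne, (A j, j), ⟨j, rfl⟩, Or.inl rfl⟩
    · refine ⟨hne, (A i, i), ⟨i, rfl⟩, Or.inr ?_⟩
      show ((g * A i * A i, i) : G × Fin 3) = (g, i)
      rw [mul_assoc, hinvA, mul_one]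

private lemma cay_main {G : Type*} [Group G] [Fintype G] (A : Fin 3 → G)
    (hAinj : Function.Injective A)
    (hne1 : ∀ m, A m ≠ 1)
    (hinvA : ∀ m, A m * A m = 1)
    (key : ∀ x y z : Fin 3, A x * A z ≠ A y) :
    (cayUGraph rgMul (Set.range fun m => ((A m, m) : G × Fin 3))).CliqueFree 3 ∧
      2 * (cayUGraph rgMul
        (Set.range fun m => ((A m, m) : G × Fin 3))).edgeSet.ncard =
        15 * Fintype.card G := by
  classical
  set Γ := cayUGraph rgMul (Set.range fun m => ((A m, m) : G × Fin 3)) with hΓ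
  constructor
  · -- triangle-free
    intro t ht
    rw [SimpleGraph.is3Clique_iff] at ht
    obtain ⟨u, v, w, huv, huw, hvw, -⟩ := ht
    obtain ⟨g, i⟩ := u
    obtain ⟨h, j⟩ := v
    obtain ⟨k, l⟩ := w
    rw [hΓ, cay_adj_iff A hinvA] at huv huw hvw
    obtain ⟨-, huv⟩ := huv
    obtain ⟨-, huw⟩ := huw
    obtain ⟨-, hvw⟩ := hvw
    rcases huv with rfl | rfl <;> rcases huw with hk | hk <;> rcases hvw with hk' | hk' <;>
      exact key _ _ _ (mul_left_cancel (a := g) (by rw [← mul_assoc, ← hk', hk]))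
  · -- edge count
    have hdeg : ∀ v : G × Fin 3, Γ.degree v = 5 := by
      intro v
      obtain ⟨g, i⟩ := v
      have hnb : Γ.neighborFinset (g, i) =
          (Finset.univ.image fun j : Fin 3 => ((g * A j, j) : G × Fin 3)) ∪
          (Finset.univ.image fun l : Fin 3 => ((g * A i, l) : G × Fin 3)) := by
        ext x
        obtain ⟨h, j⟩ := x
        rw [SimpleGraph.mem_neighborFinset, hΓ, cay_adj_iff A hinvA]
        simp only [Finset.mem_union, Finset.mem_image, Finset.mem_univ, true_and,
          Prod.mk.injEq]
        constructor
        · rintro ⟨-, rfl | rfl⟩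
          · exact Or.inl ⟨j, rfl, rfl⟩
          · exact Or.inr ⟨j, rfl, rfl⟩
        · rintro (⟨m, rfl, rfl⟩ | ⟨m, rfl, rfl⟩) <;>
          · refine ⟨fun hc => ?_, ?_⟩
            · rw [Prod.mk.injEq] at hc
              have h1 := hc.1
              nth_rewrite 1 [← mul_one g] at h1
              exact hne1 _ (mul_left_cancel h1).symm
            · simp
      have hc1 : (Finset.univ.image fun j : Fin 3 =>
          ((g * A j, j) : G × Fin 3)).card = 3 := by
        rw [Finset.card_image_of_injective _ (fun x y hxy => by
          simpa using (Prod.mk.injEq _ _ _ _ ▸ hxy).2)]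
        simp
      have hc2 : (Finset.univ.image fun l : Fin 3 =>
          ((g * A i, l) : G × Fin 3)).card = 3 := by
        rw [Finset.card_image_of_injective _ (fun x y hxy => by
          simpa using (Prod.mk.injEq _ _ _ _ ▸ hxy).2)]
        simp
      have hinter : (Finset.univ.image fun j : Fin 3 => ((g * A j, j) : G × Fin 3)) ∩
          (Finset.univ.image fun l : Fin 3 => ((g * A i, l) : G × Fin 3)) =
          {((g * A i, i) : G × Fin 3)} := by
        ext x
        simp only [Finset.mem_inter, Finset.mem_image, Finset.mem_univ, true_and,
          Finset.mem_singleton]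
        constructor
        · rintro ⟨⟨m, rfl⟩, ⟨m', hm'⟩⟩
          rw [Prod.mk.injEq] at hm'
          obtain ⟨he, rfl⟩ := hm'
          obtain rfl := hAinj (mul_left_cancel he)
          rfl
        · rintro rfl
          exact ⟨⟨i, rfl⟩, ⟨i, rfl⟩⟩
      have hun := Finset.card_union_add_card_inter
        (Finset.univ.image fun j : Fin 3 => ((g * A j, j) : G × Fin 3))
        (Finset.univ.image fun l : Fin 3 => ((g * A i, l) : G × Fin 3))
      rw [hc1, hc2, hinter, Finset.card_singleton] at hun
      rw [SimpleGraph.degree, hnb]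
      omega
    have hsum := Γ.sum_degrees_eq_twice_card_edges
    rw [Finset.sum_congr rfl (fun v _ => hdeg v), Finset.sum_const, smul_eq_mul] at hsum
    have hcard : (Finset.univ : Finset (G × Fin 3)).card = Fintype.card G * 3 := by
      simp [Fintype.card_prod]
    rw [hcard] at hsum
    have hncard : Γ.edgeSet.ncard = Γ.edgeFinset.card := by
      rw [← SimpleGraph.coe_edgeFinset, Set.ncard_coe_finset]
    rw [hncard]
    omega

/-- For three involutions `a₁, a₂, a₃` as in the statement and
`C = {(a₁,r₁), (a₂,r₂), (a₃,r₃)} ⊆ G × R₃`, the underlying graph of `Cay(G × R₃, C)`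
has `3m` vertices, is triangle-free, and has `15m/2` edges. -/
theorem stmt9 {G : Type*} [Group G] [Fintype G]
    (a₁ a₂ a₃ : G)
    (hne : a₁ ≠ a₂ ∧ a₁ ≠ a₃ ∧ a₂ ≠ a₃)
    (hinv : ∀ a ∈ ({a₁, a₂, a₃} : Set G), a ≠ 1 ∧ a ^ 2 = 1)
    (hprod : ∀ a ∈ ({a₁, a₂, a₃} : Set G), ∀ b ∈ ({a₁, a₂, a₃} : Set G),
      a ≠ b → a * b ∉ ({a₁, a₂, a₃} : Set G)) :
    Nat.card (G × Fin 3) = 3 * Fintype.card G ∧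
      (cayUGraph rgMul
        ({(a₁, (0 : Fin 3)), (a₂, (1 : Fin 3)), (a₃, (2 : Fin 3))} :
          Set (G × Fin 3))).CliqueFree 3 ∧
      2 * (cayUGraph rgMul
        ({(a₁, (0 : Fin 3)), (a₂, (1 : Fin 3)), (a₃, (2 : Fin 3))} :
          Set (G × Fin 3))).edgeSet.ncard = 15 * Fintype.card G := by
  obtain ⟨h12, h13, h23⟩ := hne
  have hset : ({(a₁, (0 : Fin 3)), (a₂, (1 : Fin 3)), (a₃, (2 : Fin 3))} :
      Set (G × Fin 3)) = Set.range fun m => ((![a₁, a₂, a₃] m, m) : G × Fin 3) := by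
    ext x
    constructor
    · rintro (rfl | rfl | rfl)
      exacts [⟨0, rfl⟩, ⟨1, rfl⟩, ⟨2, rfl⟩]
    · rintro ⟨m, rfl⟩
      fin_cases m
      · exact Or.inl rfl
      · exact Or.inr (Or.inl rfl)
      · exact Or.inr (Or.inr rfl)
  have hmem : ∀ m : Fin 3, (![a₁, a₂, a₃] : Fin 3 → G) m ∈ ({a₁, a₂, a₃} : Set G) := by
    intro m; fin_cases m
    · exact Or.inl rfl
    · exact Or.inr (Or.inl rfl)
    · exact Or.inr (Or.inr rfl)
  have hinvA : ∀ m, (![a₁, a₂, a₃] : Fin 3 → G) m * ![a₁, a₂, a₃] m = 1 := by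
    intro m
    have := (hinv _ (hmem m)).2
    rwa [pow_two] at this
  have hne1 : ∀ m, (![a₁, a₂, a₃] : Fin 3 → G) m ≠ 1 := fun m => (hinv _ (hmem m)).1
  have hAinj : Function.Injective (![a₁, a₂, a₃] : Fin 3 → G) := by
    intro x y hxy
    fin_cases x <;> fin_cases y <;>
      simp only [Matrix.cons_val_zero, Matrix.cons_val_one, Matrix.head_cons, Fin.mk_one,
        Matrix.cons_val_two, Matrix.tail_cons, Fin.isValue] at hxy ⊢ <;>
      first
        | rfl
        | exact absurd hxy h12 | exact absurd hxy h13 | exact absurd hxy h23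
        | exact absurd hxy.symm h12 | exact absurd hxy.symm h13 | exact absurd hxy.symm h23
  have key : ∀ x y z : Fin 3, (![a₁, a₂, a₃] : Fin 3 → G) x * ![a₁, a₂, a₃] z ≠
      ![a₁, a₂, a₃] y := by
    intro x y z h
    by_cases hxz : (![a₁, a₂, a₃] : Fin 3 → G) x = ![a₁, a₂, a₃] z
    · rw [hxz, hinvA] at h
      exact hne1 y h.symm
    · exact hprod _ (hmem x) _ (hmem z) hxz (h ▸ hmem y)
  obtain ⟨hcf, hec⟩ := cay_main (![a₁, a₂, a₃] : Fin 3 → G) hAinj hne1 hinvA key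
  rw [hset]
  refine ⟨?_, hcf, hec⟩
  simp [Nat.card_eq_fintype_card, Fintype.card_prod, mul_comm]
end

section
/- Let G be a finite group of order m with identity e, and let a₁, a₂, a₃ ∈ G be pairwise distinct elements with aᵢ ≠ e and aᵢ² = e for each i, such that aₓ·a_y ∉ {a₁,a₂,a₃} whenever x ≠ y. Let C = {(a₁,r₁),(a₂,r₂),(a₃,r₂)} ⊆ G × R₂. Then the underlying graph of Cay(G×R₂, C) has 2m vertices, is triangle-free, and its number of edges E satisfies 2·E = 9·m. -/
/-- For three involutions `a₁, a₂, a₃` as in the statement and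
`C = {(a₁,r₁), (a₂,r₂), (a₃,r₂)} ⊆ G × R₂`, the underlying graph of `Cay(G × R₂, C)`
has `2m` vertices, is triangle-free, and has `9m/2` edges. -/
theorem stmt10 {G : Type*} [Group G] [Fintype G]
    (a₁ a₂ a₃ : G)
    (hne : a₁ ≠ a₂ ∧ a₁ ≠ a₃ ∧ a₂ ≠ a₃)
    (hinv : ∀ a ∈ ({a₁, a₂, a₃} : Set G), a ≠ 1 ∧ a ^ 2 = 1)
    (hprod : ∀ a ∈ ({a₁, a₂, a₃} : Set G), ∀ b ∈ ({a₁, a₂, a₃} : Set G),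
      a ≠ b → a * b ∉ ({a₁, a₂, a₃} : Set G)) :
    Nat.card (G × Fin 2) = 2 * Fintype.card G ∧
      (cayUGraph rgMul
        ({(a₁, (0 : Fin 2)), (a₂, (1 : Fin 2)), (a₃, (1 : Fin 2))} :
          Set (G × Fin 2))).CliqueFree 3 ∧
      2 * (cayUGraph rgMul
        ({(a₁, (0 : Fin 2)), (a₂, (1 : Fin 2)), (a₃, (1 : Fin 2))} :
          Set (G × Fin 2))).edgeSet.ncard = 9 * Fintype.card G := by
  classical
  obtain ⟨h12, h13, h23⟩ := hne
  set A : Set G := {a₁, a₂, a₃} with hA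
  have mem1 : a₁ ∈ A := by simp [hA]
  have mem2 : a₂ ∈ A := by simp [hA]
  have mem3 : a₃ ∈ A := by simp [hA]
  have hsq : ∀ a ∈ A, a * a = 1 := fun a ha => by
    have := (hinv a ha).2; rwa [pow_two] at this
  have back : ∀ a ∈ A, ∀ g : G, g = g * a * a := fun a ha g => by
    rw [mul_assoc, hsq a ha, mul_one]
  have hne1 : ∀ a ∈ A, a ≠ 1 := fun a ha => (hinv a ha).1
  set Γ := cayUGraph rgMul
      ({(a₁, (0 : Fin 2)), (a₂, (1 : Fin 2)), (a₃, (1 : Fin 2))} :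
        Set (G × Fin 2)) with hΓ
  have adj_iff : ∀ s t : G × Fin 2, Γ.Adj s t ↔
      s ≠ t ∧ ((t = (s.1 * a₁, 0) ∨ t = (s.1 * a₂, 1) ∨ t = (s.1 * a₃, 1)) ∨
        (s = (t.1 * a₁, 0) ∨ s = (t.1 * a₂, 1) ∨ s = (t.1 * a₃, 1))) := by
    intro s t
    simp only [hΓ, cayUGraph, rgMul]
    simp [eq_comm, or_assoc]
    tauto
  -- from adjacency, first coordinates differ by an element of A
  have key : ∀ s t : G × Fin 2, Γ.Adj s t → ∃ a ∈ A, t.1 = s.1 * a := by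
    intro s t h
    rw [adj_iff] at h
    rcases h.2 with (h' | h' | h') | (h' | h' | h')
    · exact ⟨a₁, mem1, by rw [h']⟩
    · exact ⟨a₂, mem2, by rw [h']⟩
    · exact ⟨a₃, mem3, by rw [h']⟩
    · exact ⟨a₁, mem1, by rw [h']; exact back a₁ mem1 t.1⟩
    · exact ⟨a₂, mem2, by rw [h']; exact back a₂ mem2 t.1⟩
    · exact ⟨a₃, mem3, by rw [h']; exact back a₃ mem3 t.1⟩
  refine ⟨by simp [Nat.card_eq_fintype_card, mul_comm], ?_, ?_⟩
  · -- triangle-free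
    intro S hS
    rw [SimpleGraph.is3Clique_iff] at hS
    obtain ⟨u, v, w, huv, huw, hvw, -⟩ := hS
    obtain ⟨a, ha, hva⟩ := key u v huv
    obtain ⟨b, hb, hwb⟩ := key u w huw
    obtain ⟨c, hc, hwc⟩ := key v w hvw
    have hbac : b = a * c := by
      have : u.1 * b = u.1 * (a * c) := by rw [← mul_assoc, ← hva, ← hwc, hwb]
      exact mul_left_cancel this
    by_cases hac : a = c
    · exact hne1 b hb (by rw [hbac, hac, hsq c hc])
    · exact hprod a ha c hc hac (hbac ▸ hb)
  · -- edge count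
    have f01 : ((0:Fin 2)) ≠ 1 := by decide
    have nefix : ∀ a ∈ A, ∀ (i : Fin 2), ∀ g : G, (g, i) ≠ ((g * a, i) : G × Fin 2) := by
      intro a ha i g h
      rw [Prod.mk.injEq] at h
      exact hne1 a ha (mul_left_cancel (a := g) (by rw [mul_one]; exact h.1.symm))
    have sndne : ∀ (g x : G), ((g, (0:Fin 2)) : G × Fin 2) ≠ (x, 1) := by
      intro g x h
      rw [Prod.mk.injEq] at h
      exact f01 h.2
    have ftwo : ∀ i : Fin 2, i = 0 ∨ i = 1 := by decide
    have hadj0 : ∀ g : G, ∀ t : G × Fin 2, Γ.Adj (g, (0:Fin 2)) t ↔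
        (t = (g*a₁, 0) ∨ t = (g*a₁, 1) ∨ t = (g*a₂, 1) ∨ t = (g*a₃, 1)) := by
      intro g t
      rw [adj_iff]
      constructor
      · rintro ⟨hne', (h|h|h)|(h|h|h)⟩
        · exact Or.inl h
        · exact Or.inr (Or.inr (Or.inl h))
        · exact Or.inr (Or.inr (Or.inr h))
        · rw [Prod.mk.injEq] at h
          have h1 : t.1 = g * a₁ := by rw [h.1]; exact back a₁ mem1 t.1
          rcases ftwo t.2 with h2 | h2
          · exact Or.inl (by rw [← h1, ← h2])
          · exact Or.inr (Or.inl (by rw [← h1, ← h2]))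
        · rw [Prod.mk.injEq] at h; exact absurd h.2 f01
        · rw [Prod.mk.injEq] at h; exact absurd h.2 f01
      · rintro (h|h|h|h)
        · exact ⟨h ▸ nefix a₁ mem1 0 g, Or.inl (Or.inl h)⟩
        · refine ⟨h ▸ sndne g (g * a₁), Or.inr (Or.inl ?_)⟩
          rw [h]; exact Prod.ext (back a₁ mem1 g) rfl
        · exact ⟨h ▸ sndne g (g * a₂), Or.inl (Or.inr (Or.inl h))⟩
        · exact ⟨h ▸ sndne g (g * a₃), Or.inl (Or.inr (Or.inr h))⟩
    have hadj1 : ∀ g : G, ∀ t : G × Fin 2, Γ.Adj (g, (1:Fin 2)) t ↔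
        (t = (g*a₁, 0) ∨ t = (g*a₂, 0) ∨ t = (g*a₃, 0) ∨ t = (g*a₂, 1) ∨ t = (g*a₃, 1)) := by
      intro g t
      rw [adj_iff]
      constructor
      · rintro ⟨hne', (h|h|h)|(h|h|h)⟩
        · exact Or.inl h
        · exact Or.inr (Or.inr (Or.inr (Or.inl h)))
        · exact Or.inr (Or.inr (Or.inr (Or.inr h)))
        · rw [Prod.mk.injEq] at h; exact absurd h.2.symm f01
        · rw [Prod.mk.injEq] at h
          have h1 : t.1 = g * a₂ := by rw [h.1]; exact back a₂ mem2 t.1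
          rcases ftwo t.2 with h2 | h2
          · exact Or.inr (Or.inl (by rw [← h1, ← h2]))
          · exact Or.inr (Or.inr (Or.inr (Or.inl (by rw [← h1, ← h2]))))
        · rw [Prod.mk.injEq] at h
          have h1 : t.1 = g * a₃ := by rw [h.1]; exact back a₃ mem3 t.1
          rcases ftwo t.2 with h2 | h2
          · exact Or.inr (Or.inr (Or.inl (by rw [← h1, ← h2])))
          · exact Or.inr (Or.inr (Or.inr (Or.inr (by rw [← h1, ← h2]))))
      · rintro (h|h|h|h|h)
        · refine ⟨fun e => sndne (g * a₁) g ((h ▸ e).symm), Or.inl (Or.inl h)⟩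
        · refine ⟨fun e => sndne (g * a₂) g ((h ▸ e).symm), Or.inr (Or.inr (Or.inl ?_))⟩
          rw [h]; exact Prod.ext (back a₂ mem2 g) rfl
        · refine ⟨fun e => sndne (g * a₃) g ((h ▸ e).symm), Or.inr (Or.inr (Or.inr ?_))⟩
          rw [h]; exact Prod.ext (back a₃ mem3 g) rfl
        · exact ⟨h ▸ nefix a₂ mem2 1 g, Or.inl (Or.inr (Or.inl h))⟩
        · exact ⟨h ▸ nefix a₃ mem3 1 g, Or.inl (Or.inr (Or.inr h))⟩
    have nf0 : ∀ g : G, Γ.neighborFinset (g, (0:Fin 2)) =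
        {(g*a₁, (0:Fin 2)), (g*a₁, 1), (g*a₂, 1), (g*a₃, 1)} := by
      intro g; ext t
      simp [SimpleGraph.mem_neighborFinset, hadj0]
    have nf1 : ∀ g : G, Γ.neighborFinset (g, (1:Fin 2)) =
        {(g*a₁, (0:Fin 2)), (g*a₂, 0), (g*a₃, 0), (g*a₂, 1), (g*a₃, 1)} := by
      intro g; ext t
      simp [SimpleGraph.mem_neighborFinset, hadj1]
    have deg0 : ∀ g : G, Γ.degree (g, (0:Fin 2)) = 4 := by
      intro g
      rw [← SimpleGraph.card_neighborFinset_eq_degree, nf0]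
      rw [Finset.card_insert_of_notMem (by simp [Prod.ext_iff]),
        Finset.card_insert_of_notMem (by simp [Prod.ext_iff, h12, h13]),
        Finset.card_insert_of_notMem (by simp [Prod.ext_iff, h23]),
        Finset.card_singleton]
    have deg1 : ∀ g : G, Γ.degree (g, (1:Fin 2)) = 5 := by
      intro g
      rw [← SimpleGraph.card_neighborFinset_eq_degree, nf1]
      rw [Finset.card_insert_of_notMem (by simp [Prod.ext_iff, h12, h13]),
        Finset.card_insert_of_notMem (by simp [Prod.ext_iff, h23]),
        Finset.card_insert_of_notMem (by simp [Prod.ext_iff]),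
        Finset.card_insert_of_notMem (by simp [Prod.ext_iff, h23]),
        Finset.card_singleton]
    have hsum : ∑ v : G × Fin 2, Γ.degree v = 9 * Fintype.card G := by
      rw [Fintype.sum_prod_type]
      have h9 : ∀ g : G, ∑ i : Fin 2, Γ.degree (g, i) = 9 := by
        intro g
        rw [Fin.sum_univ_two, deg0 g, deg1 g]
      calc (∑ g : G, ∑ i : Fin 2, Γ.degree (g, i)) = ∑ _g : G, 9 := by
            exact Finset.sum_congr rfl fun g _ => h9 g
        _ = 9 * Fintype.card G := by
            rw [Finset.sum_const, smul_eq_mul, mul_comm, Finset.card_univ]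
    have htwice := SimpleGraph.sum_degrees_eq_twice_card_edges Γ
    rw [hsum] at htwice
    rw [Set.ncard_eq_toFinset_card']
    exact htwice.symm
end

section
/- Let G be a group with identity e, and let a₁, a₂, a₃ ∈ G be pairwise distinct elements with aᵢ ≠ e and aᵢ² = e for each i, such that aₓ·a_y ∉ {a₁,a₂,a₃} whenever x ≠ y. Let C = {(a₁,r₁),(a₂,r₁),(a₃,r₁),(e,r₂)} ⊆ G × R₂. Then for every g ∈ G and every i ∈ {1,2,3}, the vertices (g,r₂) and (g·aᵢ, r₁) are adjacent in the underlying graph of Cay(G×R₂, C), and they have exactly one common neighbour, namely (g,r₁); in other words, the edge {(g,r₂),(g·aᵢ,r₁)} lies in exactly one triangle. -/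
lemma cayUGraph_adj {S : Type*} (mul : S → S → S) (C : Set S) (s t : S) :
    (cayUGraph mul C).Adj s t ↔ s ≠ t ∧ ∃ c ∈ C, mul s c = t ∨ mul t c = s := Iff.rfl

/-- For `C = {(a₁,r₁), (a₂,r₁), (a₃,r₁), (e,r₂)} ⊆ G × R₂` with `a₁, a₂, a₃` three
involutions as in the statement: for each `g ∈ G` and `a ∈ {a₁,a₂,a₃}`, the vertices
`(g,r₂)` and `(g·a, r₁)` are adjacent in the underlying graph of `Cay(G × R₂, C)`, and
their set of common neighbours is exactly `{(g, r₁)}` (the edge lies in one triangle). -/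
theorem stmt11 {G : Type*} [Group G]
    (a₁ a₂ a₃ : G)
    (hne : a₁ ≠ a₂ ∧ a₁ ≠ a₃ ∧ a₂ ≠ a₃)
    (hinv : ∀ a ∈ ({a₁, a₂, a₃} : Set G), a ≠ 1 ∧ a ^ 2 = 1)
    (hprod : ∀ a ∈ ({a₁, a₂, a₃} : Set G), ∀ b ∈ ({a₁, a₂, a₃} : Set G),
      a ≠ b → a * b ∉ ({a₁, a₂, a₃} : Set G)) :
    ∀ g : G, ∀ a ∈ ({a₁, a₂, a₃} : Set G),
      (cayUGraph rgMul
        ({(a₁, (0 : Fin 2)), (a₂, (0 : Fin 2)), (a₃, (0 : Fin 2)),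
          ((1 : G), (1 : Fin 2))} : Set (G × Fin 2))).Adj
        (g, (1 : Fin 2)) (g * a, (0 : Fin 2)) ∧
      {w : G × Fin 2 |
          (cayUGraph rgMul
            ({(a₁, (0 : Fin 2)), (a₂, (0 : Fin 2)), (a₃, (0 : Fin 2)),
              ((1 : G), (1 : Fin 2))} : Set (G × Fin 2))).Adj (g, (1 : Fin 2)) w ∧
          (cayUGraph rgMul
            ({(a₁, (0 : Fin 2)), (a₂, (0 : Fin 2)), (a₃, (0 : Fin 2)),
              ((1 : G), (1 : Fin 2))} : Set (G × Fin 2))).Adj (g * a, (0 : Fin 2)) w} =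
        {(g, (0 : Fin 2))} := by
  have key : ∀ x ∈ ({a₁,a₂,a₃} : Set G), ∀ y ∈ ({a₁,a₂,a₃} : Set G),
      ∀ z ∈ ({a₁,a₂,a₃} : Set G), x * y ≠ z := by
    intro x hx y hy z hz
    by_cases hxy : x = y
    · subst hxy
      have hx2 := (hinv x hx).2
      rw [pow_two] at hx2
      rw [hx2]
      exact fun hzz => (hinv z hz).1 hzz.symm
    · exact fun hzz => hprod x hx y hy hxy (hzz ▸ hz)
  intro g a ha
  have ha1 : a ≠ 1 := (hinv a ha).1
  have haa : a * a = 1 := by have := (hinv a ha).2; rwa [pow_two] at this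
  have haC : (a, (0:Fin 2)) ∈ ({(a₁,(0:Fin 2)),(a₂,(0:Fin 2)),(a₃,(0:Fin 2)),
      ((1:G),(1:Fin 2))} : Set (G × Fin 2)) := by
    rcases ha with rfl | rfl | rfl <;> simp
  refine ⟨⟨by simp [Prod.ext_iff], (a, 0), haC, Or.inl rfl⟩, ?_⟩
  ext ⟨h, j⟩
  simp only [Set.mem_setOf_eq, Set.mem_singleton_iff, cayUGraph_adj, rgMul,
    Set.mem_insert_iff, Set.mem_singleton_iff, Prod.mk.injEq, ne_eq]
  constructor
  · rintro ⟨⟨hne1, c, hc, hcase1⟩, ⟨hne2, c', hc', hcase2⟩⟩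
    have step1 : (h = g ∧ j = 0) ∨ (j = 0 ∧ ∃ b ∈ ({a₁,a₂,a₃} : Set G), h = g * b) := by
      rcases hc with rfl | rfl | rfl | rfl <;>
        simp only [rgMul, Prod.mk.injEq, mul_one] at hcase1
      · rcases hcase1 with ⟨h1, h2⟩ | ⟨h1, h2⟩
        · exact Or.inr ⟨h2.symm, a₁, by simp, h1.symm⟩
        · exact absurd h2 (by decide)
      · rcases hcase1 with ⟨h1, h2⟩ | ⟨h1, h2⟩
        · exact Or.inr ⟨h2.symm, a₂, by simp, h1.symm⟩
        · exact absurd h2 (by decide)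
      · rcases hcase1 with ⟨h1, h2⟩ | ⟨h1, h2⟩
        · exact Or.inr ⟨h2.symm, a₃, by simp, h1.symm⟩
        · exact absurd h2 (by decide)
      · rcases hcase1 with ⟨h1, h2⟩ | ⟨h1, h2⟩
        · exact absurd ⟨h1, h2⟩ hne1
        · have hj : j = 0 := by
            by_contra hj0
            have hj1 : j = 1 := by omega
            exact hne1 ⟨h1.symm, hj1.symm⟩
          exact Or.inl ⟨h1, hj⟩
    have step2 : (∃ b ∈ ({a₁,a₂,a₃} : Set G), h = g * a * b) ∨ (h = g * a ∧ j = 1) := by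
      have sq : ∀ x ∈ ({a₁,a₂,a₃} : Set G), x * x = 1 := fun x hx => by
        have := (hinv x hx).2; rwa [pow_two] at this
      rcases hc' with rfl | rfl | rfl | rfl <;>
        simp only [rgMul, Prod.mk.injEq, mul_one] at hcase2
      · rcases hcase2 with ⟨h1, h2⟩ | ⟨h1, h2⟩
        · exact Or.inl ⟨a₁, by simp, h1.symm⟩
        · refine Or.inl ⟨a₁, by simp, ?_⟩
          have : h * a₁ * a₁ = g * a * a₁ := by rw [h1]
          rwa [mul_assoc, sq a₁ (by simp), mul_one] at this
      · rcases hcase2 with ⟨h1, h2⟩ | ⟨h1, h2⟩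
        · exact Or.inl ⟨a₂, by simp, h1.symm⟩
        · refine Or.inl ⟨a₂, by simp, ?_⟩
          have : h * a₂ * a₂ = g * a * a₂ := by rw [h1]
          rwa [mul_assoc, sq a₂ (by simp), mul_one] at this
      · rcases hcase2 with ⟨h1, h2⟩ | ⟨h1, h2⟩
        · exact Or.inl ⟨a₃, by simp, h1.symm⟩
        · refine Or.inl ⟨a₃, by simp, ?_⟩
          have : h * a₃ * a₃ = g * a * a₃ := by rw [h1]
          rwa [mul_assoc, sq a₃ (by simp), mul_one] at this
      · rcases hcase2 with ⟨h1, h2⟩ | ⟨h1, h2⟩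
        · exact Or.inr ⟨h1.symm, h2.symm⟩
        · exact absurd h2 (by decide)
    rcases step1 with ⟨rfl, rfl⟩ | ⟨rfl, b, hb, rfl⟩
    · exact ⟨rfl, rfl⟩
    · rcases step2 with ⟨b', hb', heq⟩ | ⟨heq, hj⟩
      · rw [mul_assoc] at heq
        exact absurd (mul_left_cancel heq).symm (key a ha b' hb' b hb)
      · exact absurd hj (by decide)
  · rintro ⟨rfl, rfl⟩
    refine ⟨⟨?_, (1, 1), by simp, Or.inr (by simp [rgMul])⟩,
            ⟨?_, (a, 0), haC, Or.inr (by simp [rgMul])⟩⟩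
    · simp
    · simpa [mul_eq_left] using ha1
end
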